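/- Let Q be a medial quandle which is the sum of an indecomposable affine mesh ((A_i)_{i∈I}; φ_{i,j}; c_{i,j}) over a set I. Then the following are equivalent: (1) Q is 2-reductive; (2) for every j ∈ I there exists i ∈ I with φ_{i,j} = 0; (3) φ_{i,j} = 0 for all i,j ∈ I. -/

import Mathlib

/-- An affine mesh over an index set `I`: abelian groups `A i`, homomorphisms
`φ i j : A i →+ A j`, and constants `c i j ∈ A j`, satisfying (M1)–(M4). -/
structure AffineMesh (I : Type*) (A : I → Type*) [∀ i, AddCommGroup (A i)] where
  φ : ∀ i j : I, A i →+ A j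
  c : ∀ i j : I, A j
  m1 : ∀ i : I, Function.Bijective fun x : A i => x - φ i i x
  m2 : ∀ i : I, c i i = 0
  m3 : ∀ i j j' k : I, (φ j k).comp (φ i j) = (φ j' k).comp (φ i j')
  m4 : ∀ i j k : I, φ j k (c i j) = φ k k (c i k - c j k)

/-- The sum of an affine mesh: the binary operation on the disjoint union of the fibres,
`a * b = c i j + φ i j a + (1 - φ j j) b` for `a ∈ A i`, `b ∈ A j`. -/
def AffineMesh.sum {I : Type*} {A : I → Type*} [∀ i, AddCommGroup (A i)]
    (M : AffineMesh I A) (x y : Σ i, A i) : Σ i, A i :=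
  ⟨y.1, M.c x.1 y.1 + M.φ x.1 y.1 x.2 + (y.2 - M.φ y.1 y.1 y.2)⟩

/-- An affine mesh is indecomposable if every fibre `A j` is generated by the
sets `c i j + Im (φ i j)`, `i ∈ I`. -/
def AffineMesh.Indecomposable {I : Type*} {A : I → Type*} [∀ i, AddCommGroup (A i)]
    (M : AffineMesh I A) : Prop :=
  ∀ j : I, AddSubgroup.closure (⋃ i : I, Set.range fun a : A i => M.c i j + M.φ i j a) = ⊤


/-- A hom vanishing on all generators of an indecomposable mesh fibre is zero. -/
lemma AffineMesh.hom_eq_zero {I : Type*} {A : I → Type*} [∀ i, AddCommGroup (A i)]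
    (M : AffineMesh I A) (hind : M.Indecomposable) {j : I} {B : Type*} [AddCommGroup B]
    (f : A j →+ B) (h : ∀ i : I, ∀ a : A i, f (M.c i j + M.φ i j a) = 0) : f = 0 := by
  have hsub : (⋃ i : I, Set.range fun a : A i => M.c i j + M.φ i j a) ⊆ (f.ker : Set (A j)) := by
    rintro x hx
    simp only [Set.mem_iUnion, Set.mem_range] at hx
    obtain ⟨i, a, rfl⟩ := hx
    exact h i a
  have hk : (⊤ : AddSubgroup (A j)) ≤ f.ker := by
    rw [← hind j]; exact (AddSubgroup.closure_le _).mpr hsub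
  ext x
  exact AddMonoidHom.mem_ker.mp (hk (AddSubgroup.mem_top x))

/-- Key lemma: if each diagonal hom `φ j j` kills all constants `c i j` and all
images of the `φ i j`, then all homomorphisms of the mesh vanish. -/
lemma AffineMesh.all_zero {I : Type*} {A : I → Type*} [∀ i, AddCommGroup (A i)]
    (M : AffineMesh I A) (hind : M.Indecomposable)
    (hc : ∀ i j : I, M.φ j j (M.c i j) = 0)
    (hφ : ∀ i j : I, ∀ a : A i, M.φ j j (M.φ i j a) = 0) :
    ∀ i j : I, M.φ i j = 0 := by
  intro j k
  refine M.hom_eq_zero hind (M.φ j k) ?_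
  intro i a
  have h1 : M.φ j k (M.c i j) = 0 := by
    rw [M.m4 i j k, map_sub, hc i k, hc j k, sub_zero]
  have h2 : M.φ j k (M.φ i j a) = 0 := by
    have h3 := congrArg (fun g : A i →+ A k => g a) (M.m3 i j k k)
    simp only [AddMonoidHom.comp_apply] at h3
    rw [h3, hφ i k a]
  rw [map_add, h1, h2, add_zero]

/-- Theorem 6.8: for a medial quandle which is the sum of an indecomposable affine
mesh, the following are equivalent: (1) the quandle is 2-reductive;
(2) every column of the homomorphism matrix contains a zero; (3) all homomorphisms
of the mesh are zero. -/
theorem mesh_sum_two_reductive_iff {I : Type*} [Nonempty I] {A : I → Type*}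
    [∀ i, AddCommGroup (A i)] (M : AffineMesh I A) (hind : M.Indecomposable) :
    ((∀ x y : Σ i, A i, M.sum (M.sum x y) y = y) ↔ ∀ j : I, ∃ i : I, M.φ i j = 0) ∧
    ((∀ j : I, ∃ i : I, M.φ i j = 0) ↔ ∀ i j : I, M.φ i j = 0) := by
  -- (2) → (3)
  have h23 : (∀ j : I, ∃ i : I, M.φ i j = 0) → ∀ i j : I, M.φ i j = 0 := by
    intro h2
    have hφ : ∀ i j : I, ∀ a : A i, M.φ j j (M.φ i j a) = 0 := by
      intro i j a
      obtain ⟨i0, hi0⟩ := h2 j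
      have h3 := congrArg (fun g : A i →+ A j => g a) (M.m3 i j i0 j)
      simp only [AddMonoidHom.comp_apply] at h3
      rw [h3, hi0]; simp
    have hc : ∀ i j : I, M.φ j j (M.c i j) = 0 := by
      intro i j
      obtain ⟨i0, hi0⟩ := h2 j
      have key : ∀ i' : I, M.φ j j (M.c i' j) = M.φ j j (M.c i0 j) := by
        intro i'
        have h := M.m4 i' i0 j
        rw [hi0, map_sub] at h
        simp only [AddMonoidHom.zero_apply] at h
        exact sub_eq_zero.mp h.symm
      have h0 : M.φ j j (M.c i0 j) = 0 := by
        have hj := key j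
        rw [M.m2, map_zero] at hj
        exact hj.symm
      rw [key i, h0]
    exact M.all_zero hind hc hφ
  -- (3) → (1)
  have h31 : (∀ i j : I, M.φ i j = 0) → ∀ x y : Σ i, A i, M.sum (M.sum x y) y = y := by
    intro h3 x y
    obtain ⟨j, b⟩ := y
    simp [AffineMesh.sum, h3, M.m2]
    rfl
  -- (1) → (3)
  have h13 : (∀ x y : Σ i, A i, M.sum (M.sum x y) y = y) → ∀ i j : I, M.φ i j = 0 := by
    intro h1
    have key : ∀ i j : I, ∀ (a : A i) (b : A j),
        M.c j j + M.φ j j (M.c i j + M.φ i j a + (b - M.φ j j b)) + (b - M.φ j j b) = b := by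
      intro i j a b
      have h := h1 ⟨i, a⟩ ⟨j, b⟩
      simp only [AffineMesh.sum, Sigma.mk.inj_iff, heq_eq_eq, true_and] at h
      exact h
    have hc : ∀ i j : I, M.φ j j (M.c i j) = 0 := by
      intro i j
      have h := key i j 0 0
      simp [M.m2] at h
      exact h
    have hφ : ∀ i j : I, ∀ a : A i, M.φ j j (M.φ i j a) = 0 := by
      intro i j a
      have h := key i j a 0
      simp [M.m2, map_add, hc i j] at h
      exact h
    exact M.all_zero hind hc hφ
  refine ⟨⟨fun h1 j => ⟨j, h13 h1 j j⟩, fun h2 => h31 (h23 h2)⟩,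
    ⟨h23, fun h3 j => ⟨Classical.arbitrary I, h3 _ j⟩⟩⟩
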